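/- Let S = ℝ_+^d, let R ≤ R̄ be two d×d reflection nonsingular M-matrices, and let X, X̄ : ℝ_+ → ℝ^d be continuous with X(0), X̄(0) ∈ S, X(0) ≤ X̄(0), and X(t) − X(s) ≤ X̄(t) − X̄(s) for all 0 ≤ s ≤ t (componentwise). Let Z, Z̄ be the solutions of the Skorohod problems in S with reflection matrices R, R̄ and driving functions X, X̄, with boundary-term vectors L, L̄. Then Z(t) ≤ Z̄(t) for all t ≥ 0 and L(t) − L(s) ≥ L̄(t) − L̄(s) for all 0 ≤ s ≤ t. -/

import Mathlib

open Set

/-- A reflection nonsingular M-matrix: `R = I - Q` with `Q ≥ 0` entrywise, zero diagonal,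
and spectral radius strictly less than `1`. -/
def IsReflMMatrix {n : Type*} [Fintype n] [DecidableEq n] (R : Matrix n n ℝ) : Prop :=
  ∃ Q : Matrix n n ℝ, (∀ i j, 0 ≤ Q i j) ∧ (∀ i, Q i i = 0) ∧
    spectralRadius ℂ (Q.map (algebraMap ℝ ℂ)) < 1 ∧ R = 1 - Q

/-- `Z` (with boundary terms `L`) solves the Skorohod problem in the orthant `ℝ_+^d`
with reflection matrix `R` and driving function `X`. -/
def IsSkorohodSolution {d : ℕ} (R : Matrix (Fin d) (Fin d) ℝ)
    (X Z L : ℝ → Fin d → ℝ) : Prop :=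
  (∀ i, Continuous fun t => Z t i) ∧
  (∀ i, Continuous fun t => L t i) ∧
  (∀ t, 0 ≤ t → ∀ i, 0 ≤ Z t i) ∧
  (∀ t, 0 ≤ t → ∀ i, Z t i = X t i + ∑ j, R i j * L t j) ∧
  (∀ i, L 0 i = 0) ∧
  (∀ i, MonotoneOn (fun t => L t i) (Ici 0)) ∧
  (∀ i, ∀ s t : ℝ, 0 ≤ s → s ≤ t → (∀ u ∈ Icc s t, Z u i ≠ 0) → L t i = L s i)

open Filter Topology Matrix

attribute [local instance] Matrix.linftyOpNormedRing Matrix.linftyOpNormedAlgebra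

lemma aux_pow_tendsto {d : ℕ} (Q : Matrix (Fin d) (Fin d) ℝ)
    (h : spectralRadius ℂ (Q.map (algebraMap ℝ ℂ)) < 1) (i j : Fin d) :
    Tendsto (fun n => (Q ^ n) i j) atTop (𝓝 0) := by
  set B := Q.map (algebraMap ℝ ℂ) with hB
  have hg := spectrum.pow_nnnorm_pow_one_div_tendsto_nhds_spectralRadius B
  obtain ⟨r, hρr, hr1⟩ := exists_between h
  have hrtop : r ≠ ⊤ := (hr1.trans_le le_top).ne
  set c : NNReal := r.toNNReal with hc
  have hrc : r = (c : ENNReal) := (ENNReal.coe_toNNReal hrtop).symm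
  have hc1 : c < 1 := by
    rw [hrc] at hr1; exact_mod_cast hr1
  have hev : ∀ᶠ n : ℕ in atTop, ‖B ^ n‖₊ < c ^ n := by
    have h1 : ∀ᶠ n : ℕ in atTop, ((‖B ^ n‖₊ : ENNReal) ^ (1 / (n:ℝ))) < r :=
      hg.eventually_lt_const hρr
    filter_upwards [h1, eventually_ge_atTop 1] with n hn hn1
    have hnpos : (0:ℝ) < (n:ℝ) := by exact_mod_cast hn1
    have h2 := ENNReal.rpow_lt_rpow hn hnpos
    rw [← ENNReal.rpow_mul,
      one_div, inv_mul_cancel₀ hnpos.ne', ENNReal.rpow_one, ENNReal.rpow_natCast, hrc,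
      ← ENNReal.coe_pow, ENNReal.coe_lt_coe] at h2
    exact h2
  have hnorm : Tendsto (fun n => ‖B ^ n‖) atTop (𝓝 0) := by
    have hb : Tendsto (fun n : ℕ => ((c:ℝ)) ^ n) atTop (𝓝 0) :=
      tendsto_pow_atTop_nhds_zero_of_lt_one c.coe_nonneg (by exact_mod_cast hc1)
    refine squeeze_zero' (Eventually.of_forall fun n => norm_nonneg _)
      (hev.mono fun n hn => ?_) hb
    have := hn.le
    exact_mod_cast this
  refine squeeze_zero_norm (fun n => ?_) hnorm
  have hmap : B ^ n = (Q ^ n).map (algebraMap ℝ ℂ) := by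
    rw [hB, ← RingHom.mapMatrix_apply, ← RingHom.mapMatrix_apply, ← map_pow]
  have h1 : ‖(Q ^ n) i j‖ = ‖(B ^ n) i j‖ := by
    rw [hmap]; simp [Matrix.map_apply, Complex.norm_real]
  rw [h1, ← coe_nnnorm, ← coe_nnnorm]
  have h2 : ‖(B ^ n) i j‖₊ ≤ ‖B ^ n‖₊ := by
    rw [linfty_opNNNorm_def]
    refine le_trans ?_ (Finset.le_sup (Finset.mem_univ i))
    exact Finset.single_le_sum (f := fun k => ‖(B ^ n) i k‖₊) (fun k _ => zero_le) (Finset.mem_univ j)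
  exact_mod_cast h2

lemma aux_oned (W M F : ℝ → ℝ) (s t c : ℝ) (hs : 0 ≤ s) (hst : s ≤ t) (hc : 0 ≤ c)
    (hMc : Continuous M)
    (hflat : ∀ a b : ℝ, 0 ≤ a → a ≤ b → (∀ u ∈ Icc a b, W u ≠ 0) → M b = M a)
    (hrel : ∀ u, s ≤ u → u ≤ t → W u = F u + (M u - M s))
    (hF : ∀ u, s ≤ u → u ≤ t → -c ≤ F u) :
    M t - M s ≤ c := by
  by_contra hcon
  push_neg at hcon
  set A : Set ℝ := Icc s t ∩ {u | M u - M s ≤ c} with hA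
  have hsA : s ∈ A := ⟨⟨le_refl s, hst⟩, by simpa using hc⟩
  have hAne : A.Nonempty := ⟨s, hsA⟩
  have hclosed : IsClosed A :=
    isClosed_Icc.inter (isClosed_le (by fun_prop) continuous_const)
  have hcomp : IsCompact A := isCompact_Icc.inter_right (isClosed_le (by fun_prop) continuous_const)
  set σ := sSup A with hσ
  have hσA : σ ∈ A := hcomp.sSup_mem hAne
  have hσs : s ≤ σ := le_csSup hcomp.bddAbove hsA
  have hσt : σ ≤ t := hσA.1.2
  have hσc : M σ - M s ≤ c := hσA.2
  have hσlt : σ < t := lt_of_le_of_ne hσt fun h => (not_le.mpr hcon) (h ▸ hσc)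
  have hWpos : ∀ u, σ < u → u ≤ t → W u ≠ 0 := by
    intro u hσu hut
    have huA : u ∉ A := fun h => absurd (le_csSup hcomp.bddAbove h) (not_le.mpr hσu)
    have hum : c < M u - M s := by
      by_contra h; push_neg at h
      exact huA ⟨⟨hσs.trans hσu.le, hut⟩, h⟩
    have := hrel u (hσs.trans hσu.le) hut
    have := hF u (hσs.trans hσu.le) hut
    nlinarith
  have hMta : ∀ a, σ < a → a ≤ t → M t = M a := by
    intro a ha hat
    exact hflat a t (hs.trans (hσs.trans ha.le)) hat
      (fun u hu => hWpos u (ha.trans_le hu.1) hu.2)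
  have hlim : M σ = M t := by
    have h1 : Tendsto M (𝓝[>] σ) (𝓝 (M σ)) :=
      (hMc.tendsto σ).mono_left nhdsWithin_le_nhds
    have h2 : Tendsto M (𝓝[>] σ) (𝓝 (M t)) := by
      refine Tendsto.congr' ?_ tendsto_const_nhds
      filter_upwards [Ioc_mem_nhdsGT_of_mem ⟨le_refl σ, hσlt⟩] with u hu
      exact hMta u hu.1 hu.2
    exact tendsto_nhds_unique h1 h2
  rw [hlim] at hσc
  exact absurd hσc (not_le.mpr hcon)

lemma aux_sigma (W M : ℝ → ℝ) (s : ℝ) (hs : 0 ≤ s)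
    (hWc : Continuous W) (hMc : Continuous M)
    (hflat : ∀ a b : ℝ, 0 ≤ a → a ≤ b → (∀ u ∈ Icc a b, W u ≠ 0) → M b = M a) :
    ∃ σ, 0 ≤ σ ∧ σ ≤ s ∧ (W σ = 0 ∨ σ = 0) ∧ M s = M σ := by
  by_cases hWs : W s = 0
  · exact ⟨s, hs, le_refl s, Or.inl hWs, rfl⟩
  set B : Set ℝ := Icc 0 s ∩ {u | W u = 0} with hB
  have hclosed : IsClosed {u : ℝ | W u = 0} := isClosed_eq hWc continuous_const
  have hcomp : IsCompact B := isCompact_Icc.inter_right hclosed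
  by_cases hBne : B.Nonempty
  · set σ := sSup B with hσ
    have hσB : σ ∈ B := hcomp.sSup_mem hBne
    have h0σ : 0 ≤ σ := hσB.1.1
    have hσs : σ ≤ s := hσB.1.2
    have hWσ : W σ = 0 := hσB.2
    have hσlt : σ < s := lt_of_le_of_ne hσs fun h => hWs (h ▸ hWσ)
    have hMta : ∀ a, σ < a → a ≤ s → M s = M a := by
      intro a ha has
      refine hflat a s (h0σ.trans ha.le) has fun u hu => ?_
      intro hWu
      have huB : u ∈ B := ⟨⟨h0σ.trans (ha.trans_le hu.1).le, hu.2⟩, hWu⟩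
      exact absurd (le_csSup hcomp.bddAbove huB) (not_le.mpr (ha.trans_le hu.1))
    have hlim : M σ = M s := by
      have h1 : Tendsto M (𝓝[>] σ) (𝓝 (M σ)) :=
        (hMc.tendsto σ).mono_left nhdsWithin_le_nhds
      have h2 : Tendsto M (𝓝[>] σ) (𝓝 (M s)) := by
        refine Tendsto.congr' ?_ tendsto_const_nhds
        filter_upwards [Ioc_mem_nhdsGT_of_mem ⟨le_refl σ, hσlt⟩] with u hu
        exact hMta u hu.1 hu.2
      exact tendsto_nhds_unique h1 h2
    exact ⟨σ, h0σ, hσs, Or.inl hWσ, hlim.symm⟩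
  · refine ⟨0, le_refl 0, hs, Or.inr rfl, ?_⟩
    refine hflat 0 s (le_refl 0) hs fun u hu hWu => hBne ⟨u, hu, hWu⟩

/-- Comparison theorem for the Skorohod problem in the orthant: if `R ≤ R̄` are reflection
nonsingular M-matrices and the driving functions satisfy `X(0) ≤ X̄(0)` and
`X(t) − X(s) ≤ X̄(t) − X̄(s)` for `0 ≤ s ≤ t`, then the solutions satisfy `Z(t) ≤ Z̄(t)`
and the boundary terms satisfy `L(t) − L(s) ≥ L̄(t) − L̄(s)`. -/
theorem stmt17 {d : ℕ} (R Rbar : Matrix (Fin d) (Fin d) ℝ)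
    (hR : IsReflMMatrix R) (hRbar : IsReflMMatrix Rbar)
    (hRle : ∀ i j, R i j ≤ Rbar i j)
    (X Xbar Z Zbar L Lbar : ℝ → Fin d → ℝ)
    (hXcont : ∀ i, Continuous fun t => X t i)
    (hXbarcont : ∀ i, Continuous fun t => Xbar t i)
    (hX0 : ∀ i, 0 ≤ X 0 i) (hXbar0 : ∀ i, 0 ≤ Xbar 0 i)
    (h0 : ∀ i, X 0 i ≤ Xbar 0 i)
    (hincr : ∀ s t : ℝ, 0 ≤ s → s ≤ t → ∀ i, X t i - X s i ≤ Xbar t i - Xbar s i)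
    (hZ : IsSkorohodSolution R X Z L) (hZbar : IsSkorohodSolution Rbar Xbar Zbar Lbar) :
    (∀ t : ℝ, 0 ≤ t → ∀ i, Z t i ≤ Zbar t i) ∧
    (∀ s t : ℝ, 0 ≤ s → s ≤ t → ∀ i, Lbar t i - Lbar s i ≤ L t i - L s i) := by
  obtain ⟨Q, hQ0, hQdiag, hQsp, hRQ⟩ := hR
  obtain ⟨Qb, hQb0, hQbdiag, hQbsp, hRQb⟩ := hRbar
  obtain ⟨hZc, hLc, hZpos, hZeq, hL0, hLmono, hLflat⟩ := hZ
  obtain ⟨hZbc, hLbc, hZbpos, hZbeq, hLb0, hLbmono, hLbflat⟩ := hZbar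
  have hQle : ∀ i j, Qb i j ≤ Q i j := by
    intro i j
    have h := hRle i j
    rw [hRQ, hRQb] at h
    simp only [Matrix.sub_apply] at h
    linarith
  -- simplified equations
  have hone : ∀ (Qm : Matrix (Fin d) (Fin d) ℝ) (v : Fin d → ℝ) (i : Fin d),
      ∑ j, ((1 : Matrix (Fin d) (Fin d) ℝ) - Qm) i j * v j = v i - ∑ j, Qm i j * v j := by
    intro Qm v i
    simp only [Matrix.sub_apply, Matrix.one_apply, sub_mul, ite_mul, one_mul, zero_mul]
    rw [Finset.sum_sub_distrib, Finset.sum_ite_eq (Finset.univ : Finset (Fin d)) i v]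
    simp
  have hZeq' : ∀ t, 0 ≤ t → ∀ i, Z t i = X t i + (L t i - ∑ j, Q i j * L t j) := by
    intro t ht i
    rw [hZeq t ht i, hRQ, hone]
  have hZbeq' : ∀ t, 0 ≤ t → ∀ i, Zbar t i = Xbar t i + (Lbar t i - ∑ j, Qb i j * Lbar t j) := by
    intro t ht i
    rw [hZbeq t ht i, hRQb, hone]
  have hLmono' : ∀ (i : Fin d) (a b : ℝ), 0 ≤ a → a ≤ b → L a i ≤ L b i := by
    intro i a b ha hab
    exact hLmono i (mem_Ici.mpr ha) (mem_Ici.mpr (ha.trans hab)) hab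
  have hLbmono' : ∀ (i : Fin d) (a b : ℝ), 0 ≤ a → a ≤ b → Lbar a i ≤ Lbar b i := by
    intro i a b ha hab
    exact hLbmono i (mem_Ici.mpr ha) (mem_Ici.mpr (ha.trans hab)) hab
  have hLnn : ∀ (i : Fin d) (a : ℝ), 0 ≤ a → 0 ≤ L a i := by
    intro i a ha
    have := hLmono' i 0 a le_rfl ha
    rw [hL0 i] at this; exact this
  have hLbnn : ∀ (i : Fin d) (a : ℝ), 0 ≤ a → 0 ≤ Lbar a i := by
    intro i a ha
    have := hLbmono' i 0 a le_rfl ha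
    rw [hLb0 i] at this; exact this
  have hZ0 : ∀ i, Z 0 i = X 0 i := by
    intro i
    rw [hZeq' 0 le_rfl i]
    simp [hL0]
  have hZb0 : ∀ i, Zbar 0 i = Xbar 0 i := by
    intro i
    rw [hZbeq' 0 le_rfl i]
    simp [hLb0]
  -- main block
  have main : ∀ s0 t0 : ℝ, 0 ≤ s0 → s0 ≤ t0 →
      (∀ i, Z t0 i ≤ Zbar t0 i) ∧ (∀ i, Lbar t0 i - Lbar s0 i ≤ L t0 i - L s0 i) := by
    intro s0 T hs0 hst0
    have hT0 : 0 ≤ T := hs0.trans hst0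
    set Sset : Fin d → Set ℝ := fun j =>
      {x | ∃ a b : ℝ, 0 ≤ a ∧ a ≤ b ∧ b ≤ T ∧
        x = (Lbar b j - Lbar a j) - (L b j - L a j)} with hSset
    have hne : ∀ j, (Sset j).Nonempty := fun j =>
      ⟨0, 0, 0, le_rfl, le_rfl, hT0, by ring⟩
    have hbdd : ∀ j, BddAbove (Sset j) := by
      intro j
      refine ⟨Lbar T j, ?_⟩
      rintro x ⟨a, b, ha, hab, hbT, rfl⟩
      have h1 : Lbar b j ≤ Lbar T j := hLbmono' j b T (ha.trans hab) hbT
      have h2 : 0 ≤ Lbar a j := hLbnn j a ha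
      have h3 : L a j ≤ L b j := hLmono' j a b ha hab
      linarith
    set β : Fin d → ℝ := fun j => sSup (Sset j) with hβ
    have hβmem : ∀ (j : Fin d) (a b : ℝ), 0 ≤ a → a ≤ b → b ≤ T →
        (Lbar b j - Lbar a j) - (L b j - L a j) ≤ β j := by
      intro j a b ha hab hbT
      exact le_csSup (hbdd j) ⟨a, b, ha, hab, hbT, rfl⟩
    have hβ0 : ∀ j, 0 ≤ β j := by
      intro j
      have := hβmem j 0 0 le_rfl le_rfl hT0
      linarith
    have hQβnn : ∀ i, 0 ≤ ∑ j, Qb i j * β j := fun i =>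
      Finset.sum_nonneg fun j _ => mul_nonneg (hQb0 i j) (hβ0 j)
    -- the sigma key estimate
    have hkey : ∀ s : ℝ, 0 ≤ s → ∀ i, ∃ σ, 0 ≤ σ ∧ σ ≤ s ∧
        Z s i - Zbar s i ≤ ∑ j, Qb i j * ((Lbar s j - Lbar σ j) - (L s j - L σ j)) := by
      intro s hs i
      obtain ⟨σ, h0σ, hσs, hWσ, hMflat⟩ :=
        aux_sigma (fun u => Z u i) (fun u => L u i) s hs (hZc i) (hLc i)
          (fun a b ha hab hW => hLflat i a b ha hab hW)
      have hZσ : Z σ i ≤ Zbar σ i := by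
        rcases hWσ with h | h
        · rw [h]; exact hZbpos σ h0σ i
        · subst h
          rw [hZ0 i, hZb0 i]; exact h0 i
      refine ⟨σ, h0σ, hσs, ?_⟩
      have e1 := hZeq' s hs i
      have e2 := hZeq' σ h0σ i
      have e3 := hZbeq' s hs i
      have e4 := hZbeq' σ h0σ i
      have hXc := hincr σ s h0σ hσs i
      have hLbi : Lbar σ i ≤ Lbar s i := hLbmono' i σ s h0σ hσs
      have hsum : (∑ j, Qb i j * (Lbar s j - Lbar σ j)) - ∑ j, Q i j * (L s j - L σ j) ≤
          ∑ j, Qb i j * ((Lbar s j - Lbar σ j) - (L s j - L σ j)) := by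
        rw [← Finset.sum_sub_distrib]
        apply Finset.sum_le_sum
        intro j _
        have hLj : 0 ≤ L s j - L σ j := sub_nonneg.mpr (hLmono' j σ s h0σ hσs)
        have h := hQle i j
        nlinarith [hQb0 i j]
      have hd1 : ∑ j, Q i j * (L s j - L σ j) =
          (∑ j, Q i j * L s j) - ∑ j, Q i j * L σ j := by
        simp [mul_sub, Finset.sum_sub_distrib]
      have hd2 : ∑ j, Qb i j * (Lbar s j - Lbar σ j) =
          (∑ j, Qb i j * Lbar s j) - ∑ j, Qb i j * Lbar σ j := by
        simp [mul_sub, Finset.sum_sub_distrib]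
      have hLs : L s i = L σ i := hMflat
      linarith
    -- increment domination via the 1-d estimate
    have hΔ : ∀ s t : ℝ, 0 ≤ s → s ≤ t → t ≤ T → ∀ i,
        (Lbar t i - Lbar s i) - (L t i - L s i) ≤ ∑ j, Qb i j * β j := by
      intro s t hs hst htT i
      obtain ⟨σ, h0σ, hσs, hZsb⟩ := hkey s hs i
      set c : ℝ := (L t i - L s i) + ∑ j, Qb i j * β j with hcdef
      have hc0 : 0 ≤ c :=
        add_nonneg (sub_nonneg.mpr (hLmono' i s t hs hst)) (hQβnn i)
      have hbound : Lbar t i - Lbar s i ≤ c := by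
        refine aux_oned (fun u => Zbar u i) (fun u => Lbar u i)
          (fun u => Zbar s i + (Xbar u i - Xbar s i) - ∑ j, Qb i j * (Lbar u j - Lbar s j))
          s t c hs hst hc0 (hLbc i)
          (fun a b ha hab hW => hLbflat i a b ha hab hW) ?_ ?_
        · -- hrel
          intro u hsu hut
          have hu0 : 0 ≤ u := hs.trans hsu
          have eu := hZbeq' u hu0 i
          have es := hZbeq' s hs i
          have hd : ∑ j, Qb i j * (Lbar u j - Lbar s j) =
              (∑ j, Qb i j * Lbar u j) - ∑ j, Qb i j * Lbar s j := by
            simp [mul_sub, Finset.sum_sub_distrib]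
          have hXs := hincr s u hs hsu i
          linarith
        · -- hF
          intro u hsu hut
          have hu0 : 0 ≤ u := hs.trans hsu
          have eu := hZeq' u hu0 i
          have es := hZeq' s hs i
          have hdQ : ∑ j, Q i j * (L u j - L s j) =
              (∑ j, Q i j * L u j) - ∑ j, Q i j * L s j := by
            simp [mul_sub, Finset.sum_sub_distrib]
          have hf1 : ∑ j, Q i j * (L u j - L s j) - Z s i - (X u i - X s i) ≤
              L t i - L s i := by
            have hZu : 0 ≤ Z u i := hZpos u hu0 i
            have hLut : L u i ≤ L t i := hLmono' i u t hu0 hut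
            linarith
          have hXs := hincr s u hs hsu i
          have hsum2 : (∑ j, Qb i j * (Lbar u j - Lbar s j)) -
              ∑ j, Q i j * (L u j - L s j) ≤
              ∑ j, Qb i j * ((Lbar u j - Lbar s j) - (L u j - L s j)) := by
            rw [← Finset.sum_sub_distrib]
            apply Finset.sum_le_sum
            intro j _
            have hLj : 0 ≤ L u j - L s j := sub_nonneg.mpr (hLmono' j s u hs hsu)
            have h := hQle i j
            nlinarith [hQb0 i j]
          have htele : (∑ j, Qb i j * ((Lbar u j - Lbar s j) - (L u j - L s j))) +
              (∑ j, Qb i j * ((Lbar s j - Lbar σ j) - (L s j - L σ j))) ≤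
              ∑ j, Qb i j * β j := by
            rw [← Finset.sum_add_distrib]
            apply Finset.sum_le_sum
            intro j _
            have hβj : (Lbar u j - Lbar σ j) - (L u j - L σ j) ≤ β j :=
              hβmem j σ u h0σ (hσs.trans hsu) (hut.trans htT)
            have h := hQb0 i j
            nlinarith
          linarith
      linarith [hbound]
    -- β is subinvariant
    have hβle : ∀ i, β i ≤ ∑ j, Qb i j * β j := by
      intro i
      apply csSup_le (hne i)
      rintro x ⟨a, b, ha, hab, hbT, rfl⟩
      exact hΔ a b ha hab hbT i
    have hiter : ∀ n : ℕ, ∀ i, β i ≤ ∑ j, (Qb ^ n) i j * β j := by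
      intro n
      induction n with
      | zero => intro i; simp [Matrix.one_apply]
      | succ n ih =>
        intro i
        have h1 : β i ≤ ∑ j, Qb i j * β j := hβle i
        have h2 : ∑ j, Qb i j * β j ≤ ∑ j, Qb i j * ∑ k, (Qb ^ n) j k * β k := by
          apply Finset.sum_le_sum
          intro j _
          exact mul_le_mul_of_nonneg_left (ih j) (hQb0 i j)
        have h3 : ∑ j, Qb i j * ∑ k, (Qb ^ n) j k * β k =
            ∑ k, (Qb ^ (n + 1)) i k * β k := by
          calc ∑ j, Qb i j * ∑ k, (Qb ^ n) j k * β k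
              = ∑ j, ∑ k, Qb i j * ((Qb ^ n) j k * β k) := by
                simp_rw [Finset.mul_sum]
            _ = ∑ k, ∑ j, Qb i j * ((Qb ^ n) j k * β k) := Finset.sum_comm
            _ = ∑ k, (∑ j, Qb i j * (Qb ^ n) j k) * β k := by
                simp_rw [Finset.sum_mul, mul_assoc]
            _ = ∑ k, (Qb ^ (n + 1)) i k * β k := by
                simp_rw [pow_succ', Matrix.mul_apply]
        linarith
    have hβzero : ∀ i, β i ≤ 0 := by
      intro i
      have htend : Tendsto (fun n : ℕ => ∑ j, (Qb ^ n) i j * β j) atTop (𝓝 0) := by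
        have h0' : (0 : ℝ) = ∑ _j : Fin d, 0 := by simp
        rw [h0']
        apply tendsto_finset_sum
        intro j _
        simpa using (aux_pow_tendsto Qb hQbsp i j).mul_const (β j)
      exact ge_of_tendsto' htend (fun n => hiter n i)
    have hQβ0 : ∀ i, ∑ j, Qb i j * β j ≤ 0 := by
      intro i
      apply Finset.sum_nonpos
      intro j _
      exact mul_nonpos_of_nonneg_of_nonpos (hQb0 i j) (hβzero j)
    constructor
    · intro i
      obtain ⟨σ, h0σ, hσT, hZsb⟩ := hkey T hT0 i
      have h1 : ∑ j, Qb i j * ((Lbar T j - Lbar σ j) - (L T j - L σ j)) ≤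
          ∑ j, Qb i j * β j := by
        apply Finset.sum_le_sum
        intro j _
        exact mul_le_mul_of_nonneg_left (hβmem j σ T h0σ hσT le_rfl) (hQb0 i j)
      have := hQβ0 i
      linarith
    · intro i
      have h1 := hΔ s0 T hs0 hst0 le_rfl i
      have := hQβ0 i
      linarith
  exact ⟨fun t ht i => (main t t ht le_rfl).1 i,
    fun s t hs hst i => (main s t hs hst).2 i⟩
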